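/- For the two-link arm with joint-space mass matrix M = m·[[L²+ℓ², ℓ²],[ℓ², ℓ²]] (m, L, ℓ with m > 0, L ≠ 0, ℓ ≠ 0), the joint torque covectors τ_x = (−mL, 0) and τ_y = (mℓ, mℓ) corresponding to unit ambient accelerations in the x and y directions both have squared dual-metric norm equal to m: τ M⁻¹ τᵀ = m for τ ∈ {τ_x, τ_y}. -/

import Mathlib

open Matrix

theorem two_link_arm_dual_norms_of_torques (m L ℓ : ℝ) (hm : 0 < m) (hL : L ≠ 0) (hℓ : ℓ ≠ 0)
    (M : Matrix (Fin 2) (Fin 2) ℝ)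
    (hM : M = m • ![![L ^ 2 + ℓ ^ 2, ℓ ^ 2], ![ℓ ^ 2, ℓ ^ 2]])
    (τx τy : Fin 2 → ℝ) (hτx : τx = ![-(m * L), 0]) (hτy : τy = ![m * ℓ, m * ℓ]) :
    τx ⬝ᵥ M⁻¹.mulVec τx = m ∧ τy ⬝ᵥ M⁻¹.mulVec τy = m := by
  have hdet : M.det = m ^ 2 * (L ^ 2 * ℓ ^ 2) := by
    rw [Matrix.det_fin_two]
    subst hM
    simp [Matrix.smul_apply]
    ring
  have hdet0 : M.det ≠ 0 := by
    rw [hdet]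
    positivity
  have hinv : M⁻¹ = M.det⁻¹ • M.adjugate := by rw [Matrix.inv_def, Ring.inverse_eq_inv]
  rw [hinv, hdet]
  rw [Matrix.adjugate_fin_two]
  subst hM hτx hτy
  have hm' : m ≠ 0 := ne_of_gt hm
  constructor <;>
  · simp [dotProduct, Matrix.mulVec, Fin.sum_univ_two, Matrix.smul_apply]
    field_simp <;> ring
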